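/- There exist constants c1, c2 > 0 such that for all n, k in [n], and epsilon > 0 with m <= k - 2*log2(1/epsilon) - c1 and k >= max(log2(n-k), log2(log2(C(n,k)))) + 2*log2(1/epsilon) + c1, a uniformly random function f : {0,1}^n -> {0,1}^m is an epsilon-extractor for (n,k) oblivious bit-fixing sources with probability at least 1 - 2^{-c2 * 2^k * epsilon^2}. -/

import Mathlib

open Finset

lemma card_fixed {n : ℕ} (L : Finset (Fin n)) (a : Fin n → Bool) :
    (Finset.univ.filter fun w : Fin n → Bool => ∀ i ∈ L, w i = a i).card = 2 ^ (n - L.card) := by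
  classical
  rw [← Fintype.card_subtype]
  have e : {w : Fin n → Bool // ∀ i ∈ L, w i = a i} ≃ ({i : Fin n // i ∉ L} → Bool) :=
    { toFun := fun w i => w.1 i.1
      invFun := fun g => ⟨fun i => if h : i ∈ L then a i else g ⟨i, h⟩, fun i hi => dif_pos hi⟩
      left_inv := fun w => Subtype.ext (funext fun i => by
        by_cases h : i ∈ L
        · simp [h, w.2 i h]
        · simp [h])
      right_inv := fun g => funext fun i => by simp [i.2] }
  rw [Fintype.card_congr e, Fintype.card_fun, Fintype.card_bool, Fintype.card_subtype]
  have : (univ.filter fun i : Fin n => i ∉ L) = Lᶜ := by ext; simp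
  rw [this, Finset.card_compl, Fintype.card_fin]

lemma card_fiber_sum {α β : Type*} [Fintype α] [DecidableEq β] (P : α → Prop) [DecidablePred P]
    (f : α → β) (S : Finset β) :
    (univ.filter fun w => P w ∧ f w ∈ S).card
      = ∑ y ∈ S, (univ.filter fun w => P w ∧ f w = y).card := by
  classical
  rw [Finset.card_eq_sum_card_fiberwise (f := f) (t := S)
    (fun x hx => (mem_filter.mp hx).2.2)]
  refine Finset.sum_congr rfl fun y hy => ?_
  congr 1
  ext w
  simp only [mem_filter, mem_univ, true_and]
  constructor
  · rintro ⟨⟨h1, _⟩, h3⟩; exact ⟨h1, h3⟩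
  · rintro ⟨h1, h3⟩; exact ⟨⟨h1, h3 ▸ hy⟩, h3⟩

lemma sum_exp_card {α β : Type*} [Fintype α] [Fintype β] [DecidableEq α] [DecidableEq β]
    (P : α → Prop) [DecidablePred P] (S : Finset β) (t : ℝ) :
    ∑ f : α → β, Real.exp (t * ((univ.filter fun w => P w ∧ f w ∈ S).card : ℝ))
      = ((S.card : ℝ) * Real.exp t + ((Fintype.card β : ℝ) - S.card)) ^ (univ.filter P).card
        * (Fintype.card β : ℝ) ^ (Fintype.card α - (univ.filter P).card) := by
  classical
  have step1 : ∀ f : α → β, Real.exp (t * ((univ.filter fun w => P w ∧ f w ∈ S).card : ℝ))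
      = ∏ w : α, Real.exp (t * (if P w ∧ f w ∈ S then (1:ℝ) else 0)) := by
    intro f
    rw [← Real.exp_sum, ← Finset.mul_sum]
    congr 2
    rw [Finset.card_filter]
    push_cast
    simp
  simp only [step1]
  have step2 := Finset.prod_univ_sum (fun _ : α => (univ : Finset β))
    (fun w y => Real.exp (t * (if P w ∧ y ∈ S then (1:ℝ) else 0)))
  rw [Fintype.piFinset_univ] at step2
  rw [← step2]
  have step3 : ∀ w : α, (∑ y : β, Real.exp (t * (if P w ∧ y ∈ S then (1:ℝ) else 0)))
      = if P w then ((S.card : ℝ) * Real.exp t + ((Fintype.card β : ℝ) - S.card))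
        else (Fintype.card β : ℝ) := by
    intro w
    by_cases hw : P w
    · simp only [hw, true_and, if_true]
      have h1 : ∀ y : β, Real.exp (t * if y ∈ S then (1:ℝ) else 0)
          = if y ∈ S then Real.exp t else 1 := by
        intro y; by_cases h : y ∈ S <;> simp [h]
      simp only [h1]
      rw [Finset.sum_ite, Finset.sum_const, Finset.sum_const, Finset.filter_univ_mem]
      have hc : (univ.filter fun x : β => x ∉ S) = Sᶜ := by ext x; simp
      rw [hc, Finset.card_compl, nsmul_eq_mul, nsmul_eq_mul, mul_one,
        Nat.cast_sub (Finset.card_le_univ S)]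
    · simp [hw]
  rw [Finset.prod_congr rfl (fun w _ => step3 w), Finset.prod_ite, Finset.prod_const,
    Finset.prod_const]
  congr 1
  congr 1
  have h2 := Finset.card_filter_add_card_filter_not (s := (univ : Finset α)) (p := P)
  have h3 : (univ : Finset α).card = Fintype.card α := Finset.card_univ
  omega

lemma exp_le_quad {t : ℝ} (h0 : 0 ≤ t) (h1 : t ≤ 1) : Real.exp t ≤ 1 + t + t ^ 2 := by
  have hb := Real.exp_bound (x := t) (by rw [abs_of_nonneg h0]; exact h1) (n := 2) (by norm_num)
  have h2 : ∑ m ∈ range 2, t ^ m / (m.factorial : ℝ) = 1 + t := by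
    simp [Finset.sum_range_succ]
  rw [h2, abs_of_nonneg h0] at hb
  have h3 := (abs_le.mp hb).2
  norm_num [Nat.factorial] at h3
  nlinarith [sq_nonneg t]

lemma count_le_sum_exp {F : Type*} [Fintype F] (X : F → ℝ) (c t : ℝ) (ht : 0 ≤ t) :
    ((univ.filter fun f => c ≤ X f).card : ℝ) * Real.exp (t * c) ≤
      ∑ f : F, Real.exp (t * X f) := by
  classical
  calc ((univ.filter fun f => c ≤ X f).card : ℝ) * Real.exp (t * c)
      = ∑ _f ∈ univ.filter fun f => c ≤ X f, Real.exp (t * c) := by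
        rw [Finset.sum_const, nsmul_eq_mul]
    _ ≤ ∑ f ∈ univ.filter fun f => c ≤ X f, Real.exp (t * X f) := by
        refine Finset.sum_le_sum fun f hf => ?_
        exact Real.exp_le_exp.mpr (mul_le_mul_of_nonneg_left (mem_filter.mp hf).2 ht)
    _ ≤ ∑ f : F, Real.exp (t * X f) := by
        refine Finset.sum_le_sum_of_subset_of_nonneg (Finset.filter_subset _ _)
          fun f _ _ => (Real.exp_pos _).le

lemma chernoff_count {α β : Type*} [Fintype α] [Fintype β] [DecidableEq α] [DecidableEq β]
    (P : α → Prop) [DecidablePred P] (S : Finset β) {ε : ℝ} (hε : 0 < ε) (hε1 : ε ≤ 1)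
    (hβ : 0 < Fintype.card β) :
    (((univ.filter fun f : α → β =>
        ((univ.filter P).card : ℝ) * ((S.card : ℝ) / (Fintype.card β : ℝ) + ε)
          ≤ ((univ.filter fun w => P w ∧ f w ∈ S).card : ℝ)).card : ℝ))
      ≤ Real.exp (-(((univ.filter P).card : ℝ) * ε ^ 2 / 4))
          * (Fintype.card β : ℝ) ^ (Fintype.card α) := by
  classical
  set N : ℕ := (univ.filter P).card with hN
  set M : ℝ := (Fintype.card β : ℝ) with hM
  set s : ℝ := (S.card : ℝ) with hs
  have hM0 : 0 < M := by rw [hM]; exact_mod_cast hβ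
  have hs0 : 0 ≤ s := Nat.cast_nonneg _
  have hsM : s ≤ M := by
    rw [hs, hM]
    exact_mod_cast (Finset.card_le_univ S).trans Finset.card_univ.le
  set t : ℝ := ε / 2 with hT
  have ht0 : 0 ≤ t := by positivity
  have ht1 : t ≤ 1 := by rw [hT]; linarith
  set c : ℝ := (N : ℝ) * (s / M + ε) with hc
  have key := count_le_sum_exp
    (fun f : α → β => ((univ.filter fun w => P w ∧ f w ∈ S).card : ℝ)) c t ht0
  rw [sum_exp_card P S t] at key
  -- bound the RHS
  have hA : s * Real.exp t + (M - s) ≤ M * Real.exp (s / M * (t + t ^ 2)) := by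
    have h1 : Real.exp t ≤ 1 + t + t ^ 2 := exp_le_quad ht0 ht1
    have h2 : s * Real.exp t + (M - s) ≤ M * (1 + s / M * (t + t ^ 2)) := by
      have : M * (1 + s / M * (t + t ^ 2)) = M + s * (t + t ^ 2) := by
        field_simp
      nlinarith
    have h3 : (1 : ℝ) + s / M * (t + t ^ 2) ≤ Real.exp (s / M * (t + t ^ 2)) := by
      linarith [Real.add_one_le_exp (s / M * (t + t ^ 2))]
    calc s * Real.exp t + (M - s) ≤ M * (1 + s / M * (t + t ^ 2)) := h2
      _ ≤ M * Real.exp (s / M * (t + t ^ 2)) := by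
          exact mul_le_mul_of_nonneg_left h3 hM0.le
  have hNK : N ≤ Fintype.card α := by
    rw [hN]; exact (Finset.card_le_univ _).trans Finset.card_univ.le
  have hrhs : (s * Real.exp t + (M - s)) ^ N * M ^ (Fintype.card α - N)
      ≤ Real.exp ((N : ℝ) * (s / M * (t + t ^ 2))) * M ^ (Fintype.card α) := by
    have hA0 : (0 : ℝ) ≤ s * Real.exp t + (M - s) := by
      have := Real.exp_pos t; nlinarith
    calc (s * Real.exp t + (M - s)) ^ N * M ^ (Fintype.card α - N)
        ≤ (M * Real.exp (s / M * (t + t ^ 2))) ^ N * M ^ (Fintype.card α - N) := by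
          exact mul_le_mul_of_nonneg_right (pow_le_pow_left₀ hA0 hA N) (by positivity)
      _ = Real.exp ((N : ℝ) * (s / M * (t + t ^ 2))) * (M ^ N * M ^ (Fintype.card α - N)) := by
          rw [mul_pow, ← Real.exp_nat_mul]; ring
      _ = Real.exp ((N : ℝ) * (s / M * (t + t ^ 2))) * M ^ (Fintype.card α) := by
          rw [← pow_add, Nat.add_sub_cancel' hNK]
  set B : ℕ := (univ.filter fun f : α → β => c
      ≤ ((univ.filter fun w => P w ∧ f w ∈ S).card : ℝ)).card with hB
  have key2 : (B : ℝ) * Real.exp (t * c)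
      ≤ Real.exp ((N : ℝ) * (s / M * (t + t ^ 2))) * M ^ (Fintype.card α) :=
    key.trans hrhs
  -- now divide by exp(t*c) and estimate the exponent
  have hexp : Real.exp ((N : ℝ) * (s / M * (t + t ^ 2))) * Real.exp (-(t * c))
      ≤ Real.exp (-((N : ℝ) * ε ^ 2 / 4)) := by
    rw [← Real.exp_add, Real.exp_le_exp]
    have hp1 : s / M ≤ 1 := by
      rw [div_le_one hM0]; exact hsM
    have hp0 : 0 ≤ s / M := by positivity
    have hN0 : (0 : ℝ) ≤ (N : ℝ) := Nat.cast_nonneg _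
    have expand : (N : ℝ) * (s / M * (t + t ^ 2)) + -(t * c)
        = (N : ℝ) * (s / M * t ^ 2 - t * ε) := by
      rw [hc]; ring
    rw [expand]
    have hkey : s / M * t ^ 2 - t * ε ≤ -(ε ^ 2 / 4) := by
      have h4 : s / M * t ^ 2 ≤ t ^ 2 := by nlinarith [sq_nonneg t]
      rw [hT]; rw [hT] at h4; nlinarith
    calc (N : ℝ) * (s / M * t ^ 2 - t * ε) ≤ (N : ℝ) * (-(ε ^ 2 / 4)) :=
          mul_le_mul_of_nonneg_left hkey hN0
      _ = -((N : ℝ) * ε ^ 2 / 4) := by ring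
  calc (B : ℝ) = (B : ℝ) * Real.exp (t * c) * Real.exp (-(t * c)) := by
        rw [mul_assoc, ← Real.exp_add]; simp
    _ ≤ (Real.exp ((N : ℝ) * (s / M * (t + t ^ 2))) * M ^ (Fintype.card α))
        * Real.exp (-(t * c)) :=
        mul_le_mul_of_nonneg_right key2 (Real.exp_pos _).le
    _ = (Real.exp ((N : ℝ) * (s / M * (t + t ^ 2))) * Real.exp (-(t * c)))
        * M ^ (Fintype.card α) := by ring
    _ ≤ Real.exp (-((N : ℝ) * ε ^ 2 / 4)) * M ^ (Fintype.card α) :=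
        mul_le_mul_of_nonneg_right hexp (by positivity)

lemma half_abs_sum {β : Type*} [Fintype β] (d : β → ℝ) (hd : ∑ y, d y = 0) :
    ∃ S : Finset β, (1 / 2 : ℝ) * ∑ y, |d y| ≤ ∑ y ∈ S, d y := by
  classical
  refine ⟨univ.filter fun y => 0 < d y, ?_⟩
  have h1 : ∑ y ∈ univ.filter (fun y => 0 < d y), d y = ∑ y : β, max (d y) 0 := by
    rw [Finset.sum_filter]
    refine Finset.sum_congr rfl fun y _ => ?_
    rcases lt_or_ge 0 (d y) with h | h
    · simp [h, max_eq_left h.le]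
    · simp [not_lt.mpr h, max_eq_right h]
  have h2 : ∑ y : β, max (d y) 0 = (∑ y, d y + ∑ y, |d y|) / 2 := by
    rw [← Finset.sum_add_distrib, Finset.sum_div]
    refine Finset.sum_congr rfl fun y _ => ?_
    rcases le_or_gt 0 (d y) with h | h
    · rw [abs_of_nonneg h, max_eq_left h]; ring
    · rw [abs_of_neg h, max_eq_right h.le]; ring
  rw [h1, h2, hd]
  ring_nf
  exact le_rfl

lemma sum_fibers_eq {n m : ℕ} (L : Finset (Fin n)) (a : Fin n → Bool)
    (f : (Fin n → Bool) → (Fin m → Bool)) :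
    ∑ y : Fin m → Bool,
        (univ.filter fun w : Fin n → Bool => (∀ i ∈ L, w i = a i) ∧ f w = y).card
      = 2 ^ (n - L.card) := by
  classical
  have h1 := card_fiber_sum (fun w : Fin n → Bool => ∀ i ∈ L, w i = a i) f
    (univ : Finset (Fin m → Bool))
  have h2 : (univ.filter fun w : Fin n → Bool => (∀ i ∈ L, w i = a i) ∧ f w ∈ univ)
      = univ.filter fun w : Fin n → Bool => ∀ i ∈ L, w i = a i := by
    simp
  rw [h2] at h1
  rw [← h1]
  exact card_fixed L a

open Classical in
lemma bad_count_le {n k m : ℕ} (hkn : k ≤ n) {ε : ℝ} (hε : 0 < ε) (hε1 : ε ≤ 1) :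
    (((univ.filter fun f : (Fin n → Bool) → (Fin m → Bool) =>
        ¬ ∀ (L : Finset (Fin n)) (a : Fin n → Bool), L.card = n - k →
          (1 / 2 : ℝ) * ∑ y : Fin m → Bool,
              |((Finset.univ.filter fun w : Fin n → Bool =>
                  (∀ i ∈ L, w i = a i) ∧ f w = y).card : ℝ) / 2 ^ k
                - 1 / 2 ^ m| ≤ ε).card : ℝ))
      ≤ (n.choose k : ℝ) * 2 ^ (n - k) * 2 ^ (2 ^ m)
          * Real.exp (-((2 ^ k : ℝ) * ε ^ 2 / 4))
          * ((2 : ℝ) ^ m) ^ (2 ^ n) := by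
  classical
  have hMcard : Fintype.card (Fin m → Bool) = 2 ^ m := by
    rw [Fintype.card_fun, Fintype.card_bool, Fintype.card_fin]
  have hKcard : Fintype.card (Fin n → Bool) = 2 ^ n := by
    rw [Fintype.card_fun, Fintype.card_bool, Fintype.card_fin]
  have hnkk : n - (n - k) = k := by omega
  -- the events
  set Ev : Finset (Fin n) → (Fin n → Bool) → Finset (Fin m → Bool)
      → Finset ((Fin n → Bool) → (Fin m → Bool)) := fun L a S =>
    univ.filter fun f =>
      (((univ.filter fun w : Fin n → Bool => ∀ i ∈ L, w i = a i).card : ℝ))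
          * ((S.card : ℝ) / (Fintype.card (Fin m → Bool) : ℝ) + ε)
        ≤ ((univ.filter fun w : Fin n → Bool =>
            (∀ i ∈ L, w i = a i) ∧ f w ∈ S).card : ℝ) with hEv
  set AL : Finset (Fin n) → Finset (Fin n → Bool) := fun L =>
    Fintype.piFinset fun i => if i ∈ L then (univ : Finset Bool) else {false} with hAL
  -- covering
  have hcover : (univ.filter fun f : (Fin n → Bool) → (Fin m → Bool) =>
        ¬ ∀ (L : Finset (Fin n)) (a : Fin n → Bool), L.card = n - k →
          (1 / 2 : ℝ) * ∑ y : Fin m → Bool,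
              |((Finset.univ.filter fun w : Fin n → Bool =>
                  (∀ i ∈ L, w i = a i) ∧ f w = y).card : ℝ) / 2 ^ k
                - 1 / 2 ^ m| ≤ ε)
      ⊆ (Finset.powersetCard (n - k) univ).biUnion fun L =>
          (AL L).biUnion fun a =>
            ((univ : Finset (Fin m → Bool)).powerset).biUnion fun S => Ev L a S := by
    intro f hf
    rw [mem_filter] at hf
    push_neg at hf
    obtain ⟨L, a, hL, hgt⟩ := hf.2
    -- canonical representative
    set a' : Fin n → Bool := fun i => if i ∈ L then a i else false with ha'
    have hsame : ∀ w : Fin n → Bool, (∀ i ∈ L, w i = a i) ↔ (∀ i ∈ L, w i = a' i) := by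
      intro w
      constructor
      · intro h i hi; simp only [ha', if_pos hi]; exact h i hi
      · intro h i hi; have := h i hi; simpa only [ha', if_pos hi] using this
    -- the deviation function
    set d : (Fin m → Bool) → ℝ := fun y =>
      ((Finset.univ.filter fun w : Fin n → Bool =>
          (∀ i ∈ L, w i = a i) ∧ f w = y).card : ℝ) / 2 ^ k - 1 / 2 ^ m with hd
    have hsumN : ∑ y : Fin m → Bool,
        ((Finset.univ.filter fun w : Fin n → Bool =>
          (∀ i ∈ L, w i = a i) ∧ f w = y).card : ℝ) = 2 ^ k := by
      rw [← Nat.cast_sum]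
      rw [sum_fibers_eq L a f, hL, hnkk]
      push_cast
      ring
    have hdsum : ∑ y, d y = 0 := by
      simp only [hd]
      rw [Finset.sum_sub_distrib, ← Finset.sum_div, hsumN]
      rw [Finset.sum_const, Finset.card_univ, hMcard, nsmul_eq_mul]
      field_simp
      norm_num
    obtain ⟨S, hS⟩ := half_abs_sum d hdsum
    have hgt' : ε < ∑ y ∈ S, d y := lt_of_lt_of_le hgt hS
    -- membership data
    refine Finset.mem_biUnion.mpr ⟨L, Finset.mem_powersetCard_univ.mpr hL, ?_⟩
    refine Finset.mem_biUnion.mpr ⟨a', ?_, ?_⟩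
    · rw [hAL]
      refine Fintype.mem_piFinset.mpr fun i => ?_
      by_cases hi : i ∈ L
      · simp [hi]
      · simp [ha', hi]
    refine Finset.mem_biUnion.mpr ⟨S, Finset.mem_powerset.mpr (Finset.subset_univ S), ?_⟩
    rw [hEv, mem_filter]
    refine ⟨Finset.mem_univ f, ?_⟩
    have hcard1 : ((univ.filter fun w : Fin n → Bool => ∀ i ∈ L, w i = a' i).card : ℝ)
        = 2 ^ k := by
      have : (univ.filter fun w : Fin n → Bool => ∀ i ∈ L, w i = a' i).card
          = 2 ^ (n - L.card) := card_fixed L a'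
      rw [this, hL, hnkk]; push_cast; ring
    have hfib : ((univ.filter fun w : Fin n → Bool =>
          (∀ i ∈ L, w i = a' i) ∧ f w ∈ S).card : ℝ)
        = ∑ y ∈ S, ((Finset.univ.filter fun w : Fin n → Bool =>
            (∀ i ∈ L, w i = a i) ∧ f w = y).card : ℝ) := by
      have e1 : (univ.filter fun w : Fin n → Bool => (∀ i ∈ L, w i = a' i) ∧ f w ∈ S)
          = univ.filter fun w : Fin n → Bool => (∀ i ∈ L, w i = a i) ∧ f w ∈ S := by
        refine Finset.filter_congr fun w _ => ?_
        rw [hsame w]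
      rw [e1, card_fiber_sum (fun w : Fin n → Bool => ∀ i ∈ L, w i = a i) f S]
      push_cast
      rfl
    rw [hcard1, hfib, hMcard]
    -- from hgt' : ε < ∑ y in S, d y
    have expand : ∑ y ∈ S, d y = (∑ y ∈ S, ((Finset.univ.filter fun w : Fin n → Bool =>
          (∀ i ∈ L, w i = a i) ∧ f w = y).card : ℝ)) / 2 ^ k - (S.card : ℝ) / 2 ^ m := by
      rw [hd, Finset.sum_sub_distrib, ← Finset.sum_div, Finset.sum_const, nsmul_eq_mul]
      ring
    rw [expand] at hgt'
    have h2k : (0 : ℝ) < 2 ^ k := by positivity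
    have hcast : ((2 ^ m : ℕ) : ℝ) = (2 : ℝ) ^ m := by push_cast; ring
    rw [hcast]
    have hstep : ε + (S.card : ℝ) / 2 ^ m < (∑ y ∈ S, ((Finset.univ.filter fun w : Fin n → Bool =>
          (∀ i ∈ L, w i = a i) ∧ f w = y).card : ℝ)) / 2 ^ k := by linarith
    have hstep2 := (lt_div_iff₀ h2k).mp hstep
    calc (2:ℝ) ^ k * ((S.card : ℝ) / 2 ^ m + ε)
        = (ε + (S.card : ℝ) / 2 ^ m) * 2 ^ k := by ring
      _ ≤ _ := hstep2.le
  -- count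
  have hcount := Finset.card_le_card hcover
  have hbiu : ((Finset.powersetCard (n - k) univ).biUnion fun L =>
          (AL L).biUnion fun a =>
            ((univ : Finset (Fin m → Bool)).powerset).biUnion fun S => Ev L a S).card
      ≤ ∑ L ∈ Finset.powersetCard (n - k) (univ : Finset (Fin n)),
          ∑ a ∈ AL L, ∑ S ∈ (univ : Finset (Fin m → Bool)).powerset, (Ev L a S).card := by
    refine (Finset.card_biUnion_le).trans (Finset.sum_le_sum fun L _ => ?_)
    refine (Finset.card_biUnion_le).trans (Finset.sum_le_sum fun a _ => ?_)
    exact Finset.card_biUnion_le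
  -- per-event bound
  have hev : ∀ L ∈ Finset.powersetCard (n - k) (univ : Finset (Fin n)),
      ∀ a : Fin n → Bool, ∀ S : Finset (Fin m → Bool),
      ((Ev L a S).card : ℝ) ≤ Real.exp (-((2 ^ k : ℝ) * ε ^ 2 / 4)) * ((2 : ℝ) ^ m) ^ (2 ^ n) := by
    intro L hLmem a S
    have hL : L.card = n - k := (Finset.mem_powersetCard_univ.mp hLmem)
    have hcardP : (univ.filter fun w : Fin n → Bool => ∀ i ∈ L, w i = a i).card = 2 ^ k := by
      rw [card_fixed L a, hL, hnkk]
    have hβ : 0 < Fintype.card (Fin m → Bool) := Fintype.card_pos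
    have hch := chernoff_count (fun w : Fin n → Bool => ∀ i ∈ L, w i = a i) S hε hε1 hβ
    beta_reduce at hch
    rw [hcardP, hMcard, hKcard] at hch
    rw [hEv]
    beta_reduce
    rw [hcardP, hMcard]
    refine hch.trans (le_of_eq ?_)
    push_cast
    ring
  -- assemble
  set B : ℝ := Real.exp (-((2 ^ k : ℝ) * ε ^ 2 / 4)) * ((2 : ℝ) ^ m) ^ (2 ^ n) with hBdef
  have hALcard : ∀ L ∈ Finset.powersetCard (n - k) (univ : Finset (Fin n)),
      (AL L).card = 2 ^ (n - k) := by
    intro L hLmem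
    have hL : L.card = n - k := Finset.mem_powersetCard_univ.mp hLmem
    simp only [hAL]
    rw [Fintype.card_piFinset]
    have hc : ∀ i : Fin n, ((if i ∈ L then (univ : Finset Bool) else {false}).card)
        = if i ∈ L then 2 else 1 := by
      intro i; split <;> simp
    simp only [hc]
    rw [Finset.prod_ite, Finset.prod_const, Finset.prod_const, one_pow, mul_one,
      Finset.filter_univ_mem, hL]
  have hpow : ((univ : Finset (Fin m → Bool)).powerset).card = 2 ^ (2 ^ m) := by
    rw [Finset.card_powerset, Finset.card_univ, hMcard]
  have h3 : ∑ L ∈ Finset.powersetCard (n - k) (univ : Finset (Fin n)), ∑ a ∈ AL L,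
      ∑ S ∈ (univ : Finset (Fin m → Bool)).powerset, ((Ev L a S).card : ℝ)
      ≤ ∑ L ∈ Finset.powersetCard (n - k) (univ : Finset (Fin n)), ∑ a ∈ AL L,
      ∑ S ∈ (univ : Finset (Fin m → Bool)).powerset, B :=
    Finset.sum_le_sum fun L hL => Finset.sum_le_sum fun a _ =>
      Finset.sum_le_sum fun S _ => hev L hL a S
  have hsum2 : ∑ L ∈ Finset.powersetCard (n - k) (univ : Finset (Fin n)), ∑ a ∈ AL L,
      ∑ S ∈ (univ : Finset (Fin m → Bool)).powerset, B
      = (n.choose k : ℝ) * 2 ^ (n - k) * 2 ^ (2 ^ m) * B := by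
    have h5 : ∀ L ∈ Finset.powersetCard (n - k) (univ : Finset (Fin n)),
        (∑ a ∈ AL L, ∑ S ∈ (univ : Finset (Fin m → Bool)).powerset, B)
          = ((2 : ℝ) ^ (n - k)) * (2 ^ (2 ^ m) * B) := by
      intro L hLmem
      simp only [Finset.sum_const, nsmul_eq_mul]
      rw [hpow, hALcard L hLmem]
      push_cast
      ring
    rw [Finset.sum_congr rfl h5, Finset.sum_const, Finset.card_powersetCard,
      Finset.card_univ, Fintype.card_fin, Nat.choose_symm hkn, nsmul_eq_mul]
    ring
  calc ((univ.filter fun f : (Fin n → Bool) → (Fin m → Bool) =>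
        ¬ ∀ (L : Finset (Fin n)) (a : Fin n → Bool), L.card = n - k →
          (1 / 2 : ℝ) * ∑ y : Fin m → Bool,
              |((Finset.univ.filter fun w : Fin n → Bool =>
                  (∀ i ∈ L, w i = a i) ∧ f w = y).card : ℝ) / 2 ^ k
                - 1 / 2 ^ m| ≤ ε).card : ℝ)
      ≤ ∑ L ∈ Finset.powersetCard (n - k) (univ : Finset (Fin n)), ∑ a ∈ AL L,
          ∑ S ∈ (univ : Finset (Fin m → Bool)).powerset, ((Ev L a S).card : ℝ) := by
        exact_mod_cast hcount.trans hbiu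
    _ ≤ ∑ L ∈ Finset.powersetCard (n - k) (univ : Finset (Fin n)), ∑ a ∈ AL L,
          ∑ S ∈ (univ : Finset (Fin m → Bool)).powerset, B := h3
    _ = (n.choose k : ℝ) * 2 ^ (n - k) * 2 ^ (2 ^ m) * B := hsum2
    _ = (n.choose k : ℝ) * 2 ^ (n - k) * 2 ^ (2 ^ m)
          * Real.exp (-((2 ^ k : ℝ) * ε ^ 2 / 4)) * ((2 : ℝ) ^ m) ^ (2 ^ n) := by
        rw [hBdef]; ring

lemma tv_le_one {n k m : ℕ} (hkn : k ≤ n) (f : (Fin n → Bool) → (Fin m → Bool))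
    (L : Finset (Fin n)) (a : Fin n → Bool) (hL : L.card = n - k) :
    (1 / 2 : ℝ) * ∑ y : Fin m → Bool,
        |((Finset.univ.filter fun w : Fin n → Bool =>
            (∀ i ∈ L, w i = a i) ∧ f w = y).card : ℝ) / 2 ^ k - 1 / 2 ^ m| ≤ 1 := by
  classical
  have hnkk : n - (n - k) = k := by omega
  have hsumN : ∑ y : Fin m → Bool,
      ((Finset.univ.filter fun w : Fin n → Bool =>
        (∀ i ∈ L, w i = a i) ∧ f w = y).card : ℝ) = 2 ^ k := by
    rw [← Nat.cast_sum, sum_fibers_eq L a f, hL, hnkk]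
    push_cast; ring
  have hbound : ∑ y : Fin m → Bool,
      |((Finset.univ.filter fun w : Fin n → Bool =>
          (∀ i ∈ L, w i = a i) ∧ f w = y).card : ℝ) / 2 ^ k - 1 / 2 ^ m| ≤ 2 := by
    have h1 : ∀ y : Fin m → Bool,
        |((Finset.univ.filter fun w : Fin n → Bool =>
            (∀ i ∈ L, w i = a i) ∧ f w = y).card : ℝ) / 2 ^ k - 1 / 2 ^ m|
          ≤ ((Finset.univ.filter fun w : Fin n → Bool =>
            (∀ i ∈ L, w i = a i) ∧ f w = y).card : ℝ) / 2 ^ k + 1 / 2 ^ m := by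
      intro y
      have ha : (0:ℝ) ≤ ((Finset.univ.filter fun w : Fin n → Bool =>
          (∀ i ∈ L, w i = a i) ∧ f w = y).card : ℝ) / 2 ^ k := by positivity
      have hb : (0:ℝ) ≤ 1 / (2:ℝ) ^ m := by positivity
      rw [abs_sub_le_iff]
      constructor <;> linarith
    calc ∑ y : Fin m → Bool, |((Finset.univ.filter fun w : Fin n → Bool =>
            (∀ i ∈ L, w i = a i) ∧ f w = y).card : ℝ) / 2 ^ k - 1 / 2 ^ m|
        ≤ ∑ y : Fin m → Bool, (((Finset.univ.filter fun w : Fin n → Bool =>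
            (∀ i ∈ L, w i = a i) ∧ f w = y).card : ℝ) / 2 ^ k + 1 / 2 ^ m) :=
          Finset.sum_le_sum fun y _ => h1 y
      _ = 2 := by
          rw [Finset.sum_add_distrib, ← Finset.sum_div, hsumN, Finset.sum_const,
            Finset.card_univ, nsmul_eq_mul]
          have : (Fintype.card (Fin m → Bool) : ℝ) = 2 ^ m := by
            rw [Fintype.card_fun, Fintype.card_bool, Fintype.card_fin]; push_cast; ring
          rw [this]
          field_simp
          norm_num
  linarith

lemma final_arith {n k m : ℕ} {ε : ℝ} (hε : 0 < ε)
    (h2m : (2:ℝ) ^ m ≤ 2 ^ k * ε ^ 2 / 32)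
    (hnk : ((n - k : ℕ) : ℝ) ≤ 2 ^ k * ε ^ 2 / 32)
    (hC : (n.choose k : ℝ) ≤ (2:ℝ) ^ ((2:ℝ) ^ k * ε ^ 2 / 32)) :
    (n.choose k : ℝ) * 2 ^ (n - k) * 2 ^ (2 ^ m) * Real.exp (-((2 ^ k : ℝ) * ε ^ 2 / 4))
      ≤ (2:ℝ) ^ (-(1 / 8 * 2 ^ k * ε ^ 2)) := by
  set A : ℝ := (2:ℝ) ^ k * ε ^ 2 with hAdef
  have hA0 : 0 < A := by rw [hAdef]; positivity
  have e1 : ((2:ℝ)) ^ (n - k : ℕ) ≤ (2:ℝ) ^ (A / 32 : ℝ) := by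
    rw [← Real.rpow_natCast 2 (n - k)]
    exact Real.rpow_le_rpow_of_exponent_le one_le_two hnk
  have e2 : ((2:ℝ)) ^ (2 ^ m : ℕ) ≤ (2:ℝ) ^ (A / 32 : ℝ) := by
    rw [← Real.rpow_natCast 2 (2 ^ m)]
    refine Real.rpow_le_rpow_of_exponent_le one_le_two ?_
    calc ((2 ^ m : ℕ) : ℝ) = (2:ℝ) ^ m := by push_cast; ring
      _ ≤ A / 32 := h2m
  have hcpos : (0:ℝ) ≤ (n.choose k : ℝ) := Nat.cast_nonneg _
  have prod_le : (n.choose k : ℝ) * 2 ^ (n - k) * 2 ^ (2 ^ m)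
      ≤ (2:ℝ) ^ (A / 32 : ℝ) * (2:ℝ) ^ (A / 32 : ℝ) * (2:ℝ) ^ (A / 32 : ℝ) := by
    have p1 : (0:ℝ) ≤ (2:ℝ) ^ (n - k : ℕ) := by positivity
    have p2 : (0:ℝ) ≤ (2:ℝ) ^ (2 ^ m : ℕ) := by positivity
    have q1 : (0:ℝ) ≤ (2:ℝ) ^ (A / 32 : ℝ) := (Real.rpow_pos_of_pos two_pos _).le
    exact mul_le_mul (mul_le_mul hC e1 p1 q1) e2 p2 (by positivity)
  have log2pos : (0:ℝ) < Real.log 2 := Real.log_pos one_lt_two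
  have rpow_exp : ∀ y : ℝ, (2:ℝ) ^ (y : ℝ) = Real.exp (Real.log 2 * y) := fun y =>
    Real.rpow_def_of_pos two_pos y
  calc (n.choose k : ℝ) * 2 ^ (n - k) * 2 ^ (2 ^ m) * Real.exp (-((2 ^ k : ℝ) * ε ^ 2 / 4))
      ≤ ((2:ℝ) ^ (A / 32 : ℝ) * (2:ℝ) ^ (A / 32 : ℝ) * (2:ℝ) ^ (A / 32 : ℝ))
          * Real.exp (-(A / 4)) := by
        exact mul_le_mul_of_nonneg_right prod_le (Real.exp_pos _).le
    _ = Real.exp (Real.log 2 * (A / 32) + Real.log 2 * (A / 32) + Real.log 2 * (A / 32)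
          + -(A / 4)) := by
        rw [rpow_exp, ← Real.exp_add, ← Real.exp_add, ← Real.exp_add]
    _ ≤ Real.exp (Real.log 2 * -(1 / 8 * A)) := by
        rw [Real.exp_le_exp]
        nlinarith [Real.log_two_lt_d9, hA0, log2pos]
    _ = (2:ℝ) ^ (-(1 / 8 * 2 ^ k * ε ^ 2)) := by
        rw [← rpow_exp]
        congr 1
        rw [hAdef]; ring

lemma params {n k m : ℕ} {ε : ℝ} (hkn : k ≤ n) (hε : 0 < ε)
    (hm : (m : ℝ) ≤ k - 2 * Real.logb 2 (1 / ε) - 5)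
    (hmax : max (Real.logb 2 ((n : ℝ) - k)) (Real.logb 2 (Real.logb 2 (n.choose k)))
        + 2 * Real.logb 2 (1 / ε) + 5 ≤ k) :
    32 ≤ (2:ℝ) ^ k * ε ^ 2 ∧ (2:ℝ) ^ m ≤ 2 ^ k * ε ^ 2 / 32
      ∧ ((n - k : ℕ) : ℝ) ≤ 2 ^ k * ε ^ 2 / 32
      ∧ (n.choose k : ℝ) ≤ (2:ℝ) ^ ((2:ℝ) ^ k * ε ^ 2 / 32) := by
  set u : ℝ := Real.logb 2 (1 / ε) with hu
  set R : ℝ := (k : ℝ) - 2 * u - 5 with hR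
  have h2u : (2:ℝ) ^ (u : ℝ) = 1 / ε := Real.rpow_logb two_pos (by norm_num) (by positivity)
  have hE : (2:ℝ) ^ (R : ℝ) = 2 ^ k * ε ^ 2 / 32 := by
    rw [hR, Real.rpow_sub two_pos, Real.rpow_sub two_pos]
    have ha : (2:ℝ) ^ ((k : ℝ) : ℝ) = (2:ℝ) ^ k := Real.rpow_natCast 2 k
    have hb : (2:ℝ) ^ ((5 : ℝ) : ℝ) = 32 := by
      rw [show (5:ℝ) = ((5:ℕ):ℝ) by norm_num, Real.rpow_natCast]; norm_num
    have hc : (2:ℝ) ^ (2 * u : ℝ) = 1 / ε ^ 2 := by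
      rw [mul_comm, Real.rpow_mul (by norm_num : (0:ℝ) ≤ 2), h2u]
      rw [show (2:ℝ) = ((2:ℕ):ℝ) by norm_num, Real.rpow_natCast]
      rw [div_pow, one_pow]
    rw [ha, hb, hc]
    field_simp
  -- max is nonneg
  have hmax0 : 0 ≤ max (Real.logb 2 ((n : ℝ) - k)) (Real.logb 2 (Real.logb 2 (n.choose k))) := by
    rcases eq_or_lt_of_le hkn with h | h
    · refine le_max_of_le_left ?_
      rw [← h]
      simp
    · refine le_max_of_le_left (Real.logb_nonneg one_lt_two ?_)
      have : (1:ℝ) ≤ (n:ℝ) - k := by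
        have : (k:ℝ) + 1 ≤ n := by exact_mod_cast h
        linarith
      linarith
  have hR0 : 0 ≤ R := by rw [hR]; linarith
  have hA32 : 32 ≤ (2:ℝ) ^ k * ε ^ 2 := by
    have h1 : (1:ℝ) ≤ (2:ℝ) ^ (R : ℝ) := by
      rw [show (1:ℝ) = (2:ℝ) ^ (0:ℝ) by rw [Real.rpow_zero]]
      exact Real.rpow_le_rpow_of_exponent_le one_le_two hR0
    rw [hE] at h1
    linarith
  refine ⟨hA32, ?_, ?_, ?_⟩
  · -- 2^m
    have h1 : (2:ℝ) ^ ((m : ℝ) : ℝ) ≤ (2:ℝ) ^ (R : ℝ) :=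
      Real.rpow_le_rpow_of_exponent_le one_le_two (by rw [hR]; linarith)
    rw [Real.rpow_natCast, hE] at h1
    exact h1
  · -- n - k
    rcases eq_or_lt_of_le hkn with h | h
    · have : n - k = 0 := by omega
      rw [this]
      norm_num
      linarith
    · have hpos : (0:ℝ) < (n:ℝ) - k := by
        have : (k:ℝ) + 1 ≤ n := by exact_mod_cast h
        linarith
      have h1 : Real.logb 2 ((n : ℝ) - k) ≤ R := by
        rw [hR]
        have := le_max_left (Real.logb 2 ((n : ℝ) - k))
          (Real.logb 2 (Real.logb 2 (n.choose k)))
        linarith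
      have h2 := (Real.logb_le_iff_le_rpow one_lt_two hpos).mp h1
      rw [hE] at h2
      rw [Nat.cast_sub hkn]
      exact h2
  · -- choose
    have hC1 : 1 ≤ n.choose k := Nat.choose_pos hkn
    rcases eq_or_lt_of_le hC1 with h | h
    · rw [← h]
      push_cast
      refine Real.one_le_rpow one_le_two ?_
      linarith
    · have hC2 : (2:ℝ) ≤ (n.choose k : ℝ) := by exact_mod_cast h
      have hlog1 : (0:ℝ) < Real.logb 2 (n.choose k) := by
        have := Real.logb_le_logb_of_le (b := 2) one_lt_two two_pos hC2
        rw [Real.logb_self_eq_one one_lt_two] at this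
        linarith
      have h1 : Real.logb 2 (Real.logb 2 (n.choose k)) ≤ R := by
        rw [hR]
        have := le_max_right (Real.logb 2 ((n : ℝ) - k))
          (Real.logb 2 (Real.logb 2 (n.choose k)))
        linarith
      have h2 := (Real.logb_le_iff_le_rpow one_lt_two hlog1).mp h1
      rw [hE] at h2
      calc (n.choose k : ℝ) = (2:ℝ) ^ (Real.logb 2 (n.choose k)) :=
            (Real.rpow_logb two_pos (by norm_num) (by positivity)).symm
        _ ≤ (2:ℝ) ^ ((2:ℝ) ^ k * ε ^ 2 / 32) :=
            Real.rpow_le_rpow_of_exponent_le one_le_two h2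



open Classical in
/-- There are constants `c₁, c₂ > 0` such that, under the stated parameter constraints,
a uniformly random function `f : {0,1}ⁿ → {0,1}^m` is an `ε`-extractor for `(n,k)`
oblivious bit-fixing sources with probability at least `1 - 2^{-c₂·2^k·ε²}`. -/
theorem random_function_is_extractor :
    ∃ c1 : ℝ, 0 < c1 ∧ ∃ c2 : ℝ, 0 < c2 ∧
      ∀ (n k m : ℕ) (ε : ℝ), 1 ≤ k → k ≤ n → 0 < ε →
        (m : ℝ) ≤ k - 2 * Real.logb 2 (1 / ε) - c1 →
        max (Real.logb 2 (n - k)) (Real.logb 2 (Real.logb 2 (n.choose k)))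
            + 2 * Real.logb 2 (1 / ε) + c1 ≤ k →
        1 - (2 : ℝ) ^ (-(c2 * 2 ^ k * ε ^ 2)) ≤
          ((Finset.univ.filter fun f : (Fin n → Bool) → (Fin m → Bool) =>
              ∀ (L : Finset (Fin n)) (a : Fin n → Bool), L.card = n - k →
                (1 / 2 : ℝ) * ∑ y : Fin m → Bool,
                    |((Finset.univ.filter fun w : Fin n → Bool =>
                        (∀ i ∈ L, w i = a i) ∧ f w = y).card : ℝ) / 2 ^ k
                      - 1 / 2 ^ m| ≤ ε).card : ℝ)
            / Fintype.card ((Fin n → Bool) → (Fin m → Bool)) := by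
  refine ⟨5, by norm_num, 1/8, by norm_num, ?_⟩
  intro n k m ε hk1 hkn hε hm hmax
  classical
  obtain ⟨hA32, h2m, hnk, hC⟩ := params hkn hε hm hmax
  have hTcard : Fintype.card ((Fin n → Bool) → (Fin m → Bool)) = (2 ^ m) ^ (2 ^ n) := by
    simp [Fintype.card_fun]
  have hT0 : (0:ℝ) < (Fintype.card ((Fin n → Bool) → (Fin m → Bool)) : ℝ) := by
    exact_mod_cast Fintype.card_pos
  rw [le_div_iff₀ hT0]
  have hsplit := Finset.card_filter_add_card_filter_not
    (s := (Finset.univ : Finset ((Fin n → Bool) → (Fin m → Bool))))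
    (p := fun f : (Fin n → Bool) → (Fin m → Bool) =>
      ∀ (L : Finset (Fin n)) (a : Fin n → Bool), L.card = n - k →
        (1 / 2 : ℝ) * ∑ y : Fin m → Bool,
            |((Finset.univ.filter fun w : Fin n → Bool =>
                (∀ i ∈ L, w i = a i) ∧ f w = y).card : ℝ) / 2 ^ k
              - 1 / 2 ^ m| ≤ ε)
  have hbad : ((Finset.univ.filter fun f : (Fin n → Bool) → (Fin m → Bool) =>
        ¬ ∀ (L : Finset (Fin n)) (a : Fin n → Bool), L.card = n - k →
          (1 / 2 : ℝ) * ∑ y : Fin m → Bool,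
              |((Finset.univ.filter fun w : Fin n → Bool =>
                  (∀ i ∈ L, w i = a i) ∧ f w = y).card : ℝ) / 2 ^ k
                - 1 / 2 ^ m| ≤ ε).card : ℝ)
      ≤ (2:ℝ) ^ (-(1 / 8 * 2 ^ k * ε ^ 2))
          * (Fintype.card ((Fin n → Bool) → (Fin m → Bool)) : ℝ) := by
    rcases le_or_gt ε 1 with hε1 | hε1
    · calc ((Finset.univ.filter fun f : (Fin n → Bool) → (Fin m → Bool) =>
            ¬ ∀ (L : Finset (Fin n)) (a : Fin n → Bool), L.card = n - k →
              (1 / 2 : ℝ) * ∑ y : Fin m → Bool,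
                  |((Finset.univ.filter fun w : Fin n → Bool =>
                      (∀ i ∈ L, w i = a i) ∧ f w = y).card : ℝ) / 2 ^ k
                    - 1 / 2 ^ m| ≤ ε).card : ℝ)
          ≤ (n.choose k : ℝ) * 2 ^ (n - k) * 2 ^ (2 ^ m)
              * Real.exp (-((2 ^ k : ℝ) * ε ^ 2 / 4)) * ((2 : ℝ) ^ m) ^ (2 ^ n) :=
            bad_count_le hkn hε hε1
        _ ≤ (2:ℝ) ^ (-(1 / 8 * 2 ^ k * ε ^ 2)) * ((2 : ℝ) ^ m) ^ (2 ^ n) :=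
            mul_le_mul_of_nonneg_right (final_arith hε h2m hnk hC) (by positivity)
        _ = (2:ℝ) ^ (-(1 / 8 * 2 ^ k * ε ^ 2))
              * (Fintype.card ((Fin n → Bool) → (Fin m → Bool)) : ℝ) := by
            rw [hTcard]; push_cast; ring
    · have hempty : (Finset.univ.filter fun f : (Fin n → Bool) → (Fin m → Bool) =>
          ¬ ∀ (L : Finset (Fin n)) (a : Fin n → Bool), L.card = n - k →
            (1 / 2 : ℝ) * ∑ y : Fin m → Bool,
                |((Finset.univ.filter fun w : Fin n → Bool =>
                    (∀ i ∈ L, w i = a i) ∧ f w = y).card : ℝ) / 2 ^ k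
                  - 1 / 2 ^ m| ≤ ε) = ∅ := by
        rw [Finset.filter_eq_empty_iff]
        intro f _
        rw [not_not]
        intro L a hL
        exact (tv_le_one hkn f L a hL).trans hε1.le
      rw [hempty]
      simp only [Finset.card_empty, Nat.cast_zero]
      positivity
  have hsplit' : ((Finset.univ.filter fun f : (Fin n → Bool) → (Fin m → Bool) =>
        ∀ (L : Finset (Fin n)) (a : Fin n → Bool), L.card = n - k →
          (1 / 2 : ℝ) * ∑ y : Fin m → Bool,
              |((Finset.univ.filter fun w : Fin n → Bool =>
                  (∀ i ∈ L, w i = a i) ∧ f w = y).card : ℝ) / 2 ^ k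
                - 1 / 2 ^ m| ≤ ε).card : ℝ)
      + ((Finset.univ.filter fun f : (Fin n → Bool) → (Fin m → Bool) =>
        ¬ ∀ (L : Finset (Fin n)) (a : Fin n → Bool), L.card = n - k →
          (1 / 2 : ℝ) * ∑ y : Fin m → Bool,
              |((Finset.univ.filter fun w : Fin n → Bool =>
                  (∀ i ∈ L, w i = a i) ∧ f w = y).card : ℝ) / 2 ^ k
                - 1 / 2 ^ m| ≤ ε).card : ℝ)
      = (Fintype.card ((Fin n → Bool) → (Fin m → Bool)) : ℝ) := by
    rw [← Finset.card_univ]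
    exact_mod_cast hsplit
  have expand : (1 - (2:ℝ) ^ (-(1 / 8 * 2 ^ k * ε ^ 2)))
        * (Fintype.card ((Fin n → Bool) → (Fin m → Bool)) : ℝ)
      = (Fintype.card ((Fin n → Bool) → (Fin m → Bool)) : ℝ)
        - (2:ℝ) ^ (-(1 / 8 * 2 ^ k * ε ^ 2))
          * (Fintype.card ((Fin n → Bool) → (Fin m → Bool)) : ℝ) := by ring
  rw [expand]
  linarith
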